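/- Let Y be a real random variable with P(Y ≥ x) = F̄_GPD(x; σ, ξ) for all x ≥ 0, where σ > 0 and ξ ≥ 0. Let λ > 0, let 0 < h ≤ 1, and set X = ⌊λY + 1 − h⌋. Then for every integer u ≥ 1 − h and every k ∈ ℕ, P(X ≥ u + k) / P(X ≥ u) = F̄_GPD(k; λσ + ξ(u + h − 1), ξ). That is, conditionally on X ≥ u, the exceedance X − u has the discrete generalized Pareto distribution with scale parameter λσ + ξ(u + h − 1) and shape parameter ξ; so discretizing a GPD by any rounding scheme and thresholding yields a D-GPD with the same shape parameter. -/

import Mathlib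

open MeasureTheory
open scoped ProbabilityTheory

/-- Generalized Pareto survival function `F̄_GPD(x; σ, ξ)` for `ξ ≥ 0`:
`(1 + ξx/σ)^(-1/ξ)` if `ξ > 0`, and `e^(-x/σ)` if `ξ = 0`. -/
noncomputable def gpdSurv (σ ξ x : ℝ) : ℝ :=
  if ξ = 0 then Real.exp (-x / σ) else (1 + ξ * x / σ) ^ (-1 / ξ)

/-- Let `Y` be GPD(σ, ξ) distributed with `σ > 0`, `ξ ≥ 0`, let `λ > 0`,
`0 < h ≤ 1` and set `X = ⌊λY + 1 - h⌋`. Then for every integer `u ≥ 1 - h` and every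
`k ∈ ℕ`, `P(X ≥ u + k)/P(X ≥ u) = F̄_GPD(k; λσ + ξ(u+h-1), ξ)`: conditionally on
`X ≥ u`, the exceedance `X - u` is D-GPD with scale `λσ + ξ(u+h-1)` and shape `ξ`. -/
theorem discretized_gpd_exceedance_is_DGPD
    {Ω : Type*} [MeasureSpace Ω] [IsProbabilityMeasure (ℙ : Measure Ω)]
    (Y : Ω → ℝ) (hYm : Measurable Y) (σ ξ lam h : ℝ)
    (hσ : 0 < σ) (hξ : 0 ≤ ξ) (hlam : 0 < lam) (hh0 : 0 < h) (hh1 : h ≤ 1)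
    (hY : ∀ x ≥ (0:ℝ), (ℙ {ω | x ≤ Y ω}).toReal = gpdSurv σ ξ x) :
    ∀ u : ℤ, (1:ℝ) - h ≤ (u : ℝ) → ∀ k : ℕ,
      (ℙ {ω | (u : ℤ) + (k : ℤ) ≤ ⌊lam * Y ω + 1 - h⌋}).toReal /
          (ℙ {ω | (u : ℤ) ≤ ⌊lam * Y ω + 1 - h⌋}).toReal
        = gpdSurv (lam * σ + ξ * ((u : ℝ) + h - 1)) ξ (k : ℝ) := by
  intro u hu k
  have hx : ∀ m : ℤ, (1:ℝ) - h ≤ (m:ℝ) →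
      (ℙ {ω | m ≤ ⌊lam * Y ω + 1 - h⌋}).toReal = gpdSurv σ ξ (((m:ℝ) + h - 1)/lam) := by
    intro m hm
    have hset : {ω | m ≤ ⌊lam * Y ω + 1 - h⌋} = {ω | ((m:ℝ) + h - 1)/lam ≤ Y ω} := by
      ext ω
      simp only [Set.mem_setOf_eq, Int.le_floor]
      rw [div_le_iff₀ hlam]
      constructor <;> intro hle <;> nlinarith
    rw [hset, hY _ (div_nonneg (by linarith) hlam.le)]
  have huk : (1:ℝ) - h ≤ ((u + (k:ℤ) : ℤ) : ℝ) := by push_cast; linarith [Nat.cast_nonneg (α := ℝ) k]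
  rw [hx _ huk, hx u hu]
  set a : ℝ := (u:ℝ) + h - 1 with ha
  have ha0 : 0 ≤ a := by simp [ha]; linarith
  have hargs : (((u + (k:ℤ) : ℤ) : ℝ) + h - 1)/lam = (a + k)/lam := by push_cast; ring
  rw [hargs]
  by_cases hξ0 : ξ = 0
  · subst hξ0
    simp only [gpdSurv, eq_self_iff_true, if_true]
    rw [← Real.exp_sub]
    congr 1
    field_simp
    ring
  · have hξpos : 0 < ξ := lt_of_le_of_ne hξ (Ne.symm hξ0)
    simp only [gpdSurv, if_neg hξ0, mul_zero, add_zero]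
    have hls : 0 < lam * σ := by positivity
    have hM : (0:ℝ) < lam * σ + ξ * a := by nlinarith
    have hk0 : (0:ℝ) ≤ (k:ℝ) := Nat.cast_nonneg k
    have hb1 : (0:ℝ) ≤ 1 + ξ * ((a + k)/lam) / σ := by positivity
    have hb2 : (0:ℝ) ≤ 1 + ξ * (a/lam) / σ := by positivity
    rw [← Real.div_rpow hb1 hb2]
    congr 1
    field_simp
    ring
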